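/- Let A x ≤ b be a constraint system with A ∈ ℚ^{m×n} that has at least one rational solution, and let h ∈ ℚ^n \ {0}. Then h is a bounded direction in A x ≤ b if and only if every x ∈ ℚ^n with A x ≤ 0^m satisfies h^T x = 0. -/

import Mathlib

open Matrix

/-- Direction `h ≠ 0` is bounded in the constraint system `A x ≤ b`: there exist
`l, u ∈ ℚ` such that `A x ≤ b` implies `hᵀ x ≤ u` and `−hᵀ x ≤ −l`. -/
def Bounded {ι : Type} [Fintype ι] {n : ℕ} (A : Matrix ι (Fin n) ℚ) (b : ι → ℚ)
    (h : Fin n → ℚ) : Prop :=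
  ∃ l u : ℚ, (∀ x : Fin n → ℚ, A.mulVec x ≤ b → h ⬝ᵥ x ≤ u) ∧
    (∀ x : Fin n → ℚ, A.mulVec x ≤ b → (-h) ⬝ᵥ x ≤ -l)

namespace BAE

variable {n : ℕ}

/-- `InCone L g` : `g` is a nonneg combination of the first components of `L`. -/
def InCone : List ((Fin n → ℚ) × ℚ) → (Fin n → ℚ) → Prop
  | [], g => g = 0
  | p :: L, g => ∃ t : ℚ, 0 ≤ t ∧ InCone L (g - t • p.1)

lemma dot_self_pos {v : Fin n → ℚ} (hv : v ≠ 0) : 0 < v ⬝ᵥ v := by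
  have h1 : 0 ≤ v ⬝ᵥ v := Finset.sum_nonneg fun i _ => mul_self_nonneg _
  rcases h1.lt_or_eq with h | h
  · exact h
  · exact absurd ((dotProduct_self_eq_zero).mp h.symm) hv

/-- Lifting lemma: if the projection of `g` along `a` (relative to `x`) lies in the
cone of the projected list, then `g` lies in the cone of `(a,q) :: L`. -/
lemma lift (a x : Fin n → ℚ) (ha : 0 < a ⬝ᵥ x) (q : ℚ) :
    ∀ (L : List ((Fin n → ℚ) × ℚ)) (g : Fin n → ℚ),
      (∀ p ∈ L, p.1 ⬝ᵥ x ≤ 0) → 0 ≤ g ⬝ᵥ x →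
      InCone (L.map (fun p => (p.1 - (p.1 ⬝ᵥ x / a ⬝ᵥ x) • a, p.2)))
        (g - (g ⬝ᵥ x / a ⬝ᵥ x) • a) →
      InCone ((a, q) :: L) g := by
  intro L
  induction L with
  | nil =>
      intro g _ hg hc
      refine ⟨g ⬝ᵥ x / a ⬝ᵥ x, div_nonneg hg ha.le, ?_⟩
      exact hc
  | cons p L ih =>
      intro g hL hg hc
      obtain ⟨t, ht, hc'⟩ := hc
      have hp : p.1 ⬝ᵥ x ≤ 0 := hL p (List.mem_cons_self)
      have hrw : (g - (g ⬝ᵥ x / a ⬝ᵥ x) • a) - t • (p.1 - (p.1 ⬝ᵥ x / a ⬝ᵥ x) • a)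
          = (g - t • p.1) - (((g - t • p.1) ⬝ᵥ x) / a ⬝ᵥ x) • a := by
        have hx : (g - t • p.1) ⬝ᵥ x = g ⬝ᵥ x - t * (p.1 ⬝ᵥ x) := by
          simp [sub_dotProduct, smul_dotProduct, smul_eq_mul]
        rw [hx]
        funext i
        have hax : a ⬝ᵥ x ≠ 0 := ne_of_gt ha
        simp only [Pi.sub_apply, Pi.smul_apply, smul_eq_mul]
        field_simp
        ring
      rw [hrw] at hc'
      have hg' : 0 ≤ (g - t • p.1) ⬝ᵥ x := by
        have hx : (g - t • p.1) ⬝ᵥ x = g ⬝ᵥ x - t * (p.1 ⬝ᵥ x) := by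
          simp [sub_dotProduct, smul_dotProduct, smul_eq_mul]
        rw [hx]
        nlinarith
      have hmem : ∀ r ∈ L, r.1 ⬝ᵥ x ≤ 0 := fun r hr => hL r (List.mem_cons_of_mem _ hr)
      obtain ⟨s, hs, hsc⟩ := ih (g - t • p.1) hmem hg' hc'
      refine ⟨s, hs, t, ht, ?_⟩
      have : g - s • a - t • p.1 = g - t • p.1 - s • a := by abel
      rw [this]; exact hsc

/-- Farkas: if `h` is not in the cone of the rows, there is a direction `x` in the
recession cone with `h ⬝ᵥ x > 0`. -/
lemma farkas_aux : ∀ (k : ℕ) (L : List ((Fin n → ℚ) × ℚ)), L.length ≤ k →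
    ∀ h : Fin n → ℚ, ¬ InCone L h →
    ∃ x : Fin n → ℚ, (∀ p ∈ L, p.1 ⬝ᵥ x ≤ 0) ∧ 0 < h ⬝ᵥ x := by
  intro k
  induction k with
  | zero =>
      intro L hL h hc
      rw [List.length_eq_zero_iff.mp (Nat.le_zero.mp hL)] at hc ⊢
      have hh : h ≠ 0 := hc
      exact ⟨h, by simp, dot_self_pos hh⟩
  | succ k ih =>
      intro L hL h hc
      match L with
      | [] =>
          have hh : h ≠ 0 := hc
          exact ⟨h, by simp, dot_self_pos hh⟩
      | p :: L =>
          have hL' : L.length ≤ k := Nat.succ_le_succ_iff.mp hL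
          have hcL : ¬ InCone L h := by
            intro hc'
            exact hc ⟨0, le_refl 0, by simpa using hc'⟩
          obtain ⟨x, hx1, hx2⟩ := ih L hL' h hcL
          by_cases hax : p.1 ⬝ᵥ x ≤ 0
          · refine ⟨x, ?_, hx2⟩
            intro r hr
            rcases List.mem_cons.mp hr with h1 | h1
            · rw [h1]; exact hax
            · exact hx1 r h1
          · push_neg at hax
            set a := p.1 with ha_def
            have hax' : a ⬝ᵥ x ≠ 0 := ne_of_gt hax
            -- the projected list
            set Lp := L.map (fun r => (r.1 - (r.1 ⬝ᵥ x / a ⬝ᵥ x) • a, r.2)) with hLp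
            have hcp : ¬ InCone Lp (h - (h ⬝ᵥ x / a ⬝ᵥ x) • a) := by
              intro hcc
              have := lift a x hax p.2 L h hx1 hx2.le hcc
              rw [ha_def] at this
              exact hc this
            have hLplen : Lp.length ≤ k := by simpa [hLp] using hL'
            obtain ⟨x', hx'1, hx'2⟩ := ih Lp hLplen _ hcp
            -- the combined direction
            refine ⟨x' - (a ⬝ᵥ x' / a ⬝ᵥ x) • x, ?_, ?_⟩
            · intro r hr
              have key : ∀ v : Fin n → ℚ,
                  v ⬝ᵥ (x' - (a ⬝ᵥ x' / a ⬝ᵥ x) • x)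
                    = (v - (v ⬝ᵥ x / a ⬝ᵥ x) • a) ⬝ᵥ x' := by
                intro v
                simp only [dotProduct_sub, dotProduct_smul,
                  sub_dotProduct, smul_dotProduct, smul_eq_mul]
                field_simp
              rcases List.mem_cons.mp hr with h1 | h1
              · rw [h1, key]
                have : a - (a ⬝ᵥ x / a ⬝ᵥ x) • a = 0 := by
                  rw [div_self hax', one_smul, sub_self]
                rw [ha_def] at this ⊢
                rw [this]
                simp
              · rw [key]
                exact hx'1 _ (List.mem_map.mpr ⟨r, h1, rfl⟩)
            · have key : h ⬝ᵥ (x' - (a ⬝ᵥ x' / a ⬝ᵥ x) • x)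
                  = (h - (h ⬝ᵥ x / a ⬝ᵥ x) • a) ⬝ᵥ x' := by
                simp only [dotProduct_sub, dotProduct_smul,
                  sub_dotProduct, smul_dotProduct, smul_eq_mul]
                field_simp
              rw [key]; exact hx'2

lemma farkas (L : List ((Fin n → ℚ) × ℚ)) (h : Fin n → ℚ)
    (hc : ¬ InCone L h) :
    ∃ x : Fin n → ℚ, (∀ p ∈ L, p.1 ⬝ᵥ x ≤ 0) ∧ 0 < h ⬝ᵥ x :=
  farkas_aux L.length L le_rfl h hc

/-- From a cone representation we get a bound. -/
lemma bound_of_inCone : ∀ (L : List ((Fin n → ℚ) × ℚ)) (g : Fin n → ℚ),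
    InCone L g → ∃ u : ℚ, ∀ x : Fin n → ℚ,
      (∀ p ∈ L, p.1 ⬝ᵥ x ≤ p.2) → g ⬝ᵥ x ≤ u := by
  intro L
  induction L with
  | nil =>
      intro g hg
      exact ⟨0, fun x _ => by rw [show g = 0 from hg]; simp⟩
  | cons p L ih =>
      intro g hg
      obtain ⟨t, ht, hg'⟩ := hg
      obtain ⟨u, hu⟩ := ih _ hg'
      refine ⟨u + t * p.2, fun x hx => ?_⟩
      have h1 : (g - t • p.1) ⬝ᵥ x ≤ u :=
        hu x fun r hr => hx r (List.mem_cons_of_mem _ hr)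
      have h2 : p.1 ⬝ᵥ x ≤ p.2 := hx p (List.mem_cons_self)
      have h3 : (g - t • p.1) ⬝ᵥ x = g ⬝ᵥ x - t * (p.1 ⬝ᵥ x) := by
        simp [sub_dotProduct, smul_dotProduct, smul_eq_mul]
      nlinarith

lemma le_zero_of_bound (c s u : ℚ) (H : ∀ t : ℚ, 0 ≤ t → c + t * s ≤ u) : s ≤ 0 := by
  by_contra hs
  push_neg at hs
  have h0 : c ≤ u := by have := H 0 le_rfl; linarith
  have h1 := H ((u - c) / s + 1)
    (by have := div_nonneg (sub_nonneg.mpr h0) hs.le; linarith)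
  have h2 : ((u - c) / s + 1) * s = (u - c) + s := by
    field_simp
  nlinarith

end BAE

/-- Bounds and Equalities: if `A x ≤ b` has a rational solution and `h ≠ 0`, then
`h` is bounded in `A x ≤ b` iff every `x` with `A x ≤ 0` satisfies `hᵀ x = 0`. -/
theorem bounds_and_equalities {m n : ℕ} (A : Matrix (Fin m) (Fin n) ℚ)
    (b : Fin m → ℚ) (hfeas : ∃ x : Fin n → ℚ, A.mulVec x ≤ b)
    (h : Fin n → ℚ) (hh : h ≠ 0) :
    Bounded A b h ↔ ∀ x : Fin n → ℚ, A.mulVec x ≤ 0 → h ⬝ᵥ x = 0 := by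
  classical
  set L : List ((Fin n → ℚ) × ℚ) := (List.finRange m).map (fun i => (A i, b i)) with hLdef
  have hmemL : ∀ p, p ∈ L ↔ ∃ i : Fin m, (A i, b i) = p := by
    intro p; simp [hLdef]
  have hsatL : ∀ x : Fin n → ℚ, (∀ p ∈ L, p.1 ⬝ᵥ x ≤ p.2) ↔ A.mulVec x ≤ b := by
    intro x
    constructor
    · intro H i
      have := H (A i, b i) ((hmemL _).mpr ⟨i, rfl⟩)
      simpa [Matrix.mulVec, dotProduct] using this
    · intro H p hp
      obtain ⟨i, hi⟩ := (hmemL p).mp hp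
      have := H i
      rw [← hi]
      simpa [Matrix.mulVec, dotProduct] using this
  have hsat0 : ∀ x : Fin n → ℚ, (∀ p ∈ L, p.1 ⬝ᵥ x ≤ 0) ↔ A.mulVec x ≤ 0 := by
    intro x
    constructor
    · intro H i
      have := H (A i, b i) ((hmemL _).mpr ⟨i, rfl⟩)
      simpa [Matrix.mulVec, dotProduct] using this
    · intro H p hp
      obtain ⟨i, hi⟩ := (hmemL p).mp hp
      have := H i
      rw [← hi]
      simpa [Matrix.mulVec, dotProduct] using this
  constructor
  · -- bounded → recession directions orthogonal
    rintro ⟨l, u, hu, hl⟩ x hx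
    obtain ⟨x₀, hx₀⟩ := hfeas
    have hfeast : ∀ t : ℚ, 0 ≤ t → A.mulVec (x₀ + t • x) ≤ b := by
      intro t ht i
      have h1 : A.mulVec (x₀ + t • x) i = A.mulVec x₀ i + t * A.mulVec x i := by
        rw [Matrix.mulVec_add, Matrix.mulVec_smul]
        simp [smul_eq_mul]
      rw [h1]
      have h2 : A.mulVec x i ≤ 0 := hx i
      have h3 : A.mulVec x₀ i ≤ b i := hx₀ i
      nlinarith
    have hup : h ⬝ᵥ x ≤ 0 := by
      apply BAE.le_zero_of_bound (h ⬝ᵥ x₀) _ u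
      intro t ht
      have := hu _ (hfeast t ht)
      simpa [dotProduct_add, dotProduct_smul, smul_eq_mul] using this
    have hdown : (-h) ⬝ᵥ x ≤ 0 := by
      apply BAE.le_zero_of_bound ((-h) ⬝ᵥ x₀) _ (-l)
      intro t ht
      have := hl _ (hfeast t ht)
      simpa [dotProduct_add, dotProduct_smul, smul_eq_mul] using this
    have : -(h ⬝ᵥ x) ≤ 0 := by simpa [neg_dotProduct] using hdown
    linarith
  · -- recession orthogonality → bounded
    intro R
    have hcone : ∀ g : Fin n → ℚ, (∀ x : Fin n → ℚ, A.mulVec x ≤ 0 → g ⬝ᵥ x ≤ 0) →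
        BAE.InCone L g := by
      intro g hg
      by_contra hc
      obtain ⟨x, hx1, hx2⟩ := BAE.farkas L g hc
      have := hg x ((hsat0 x).mp hx1)
      linarith
    have hch : BAE.InCone L h :=
      hcone h (fun x hx => le_of_eq (R x hx))
    have hchn : BAE.InCone L (-h) := by
      apply hcone
      intro x hx
      have := R x hx
      simp [neg_dotProduct, this]
    obtain ⟨u, hu⟩ := BAE.bound_of_inCone L h hch
    obtain ⟨u', hu'⟩ := BAE.bound_of_inCone L (-h) hchn
    refine ⟨-u', u, fun x hx => hu x ((hsatL x).mpr hx), fun x hx => ?_⟩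
    rw [neg_neg]
    exact hu' x ((hsatL x).mpr hx)
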